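/- arXiv:0806.1621 — 3 statements merged into one kernel-verified Lean document; each statement's English description precedes it below -/
import Mathlib

section
/- Let U, D1, D2 ∈ ℝ, h > 0, δt > 0, Δt > 0, set D0 = U − (h²/24)·D2, and define u(t, x) = D0 + D1·x + D2·(x²/2 + t). Then the tooth average Ū := (1/h) ∫_{−h/2}^{h/2} u(δt, x) dx equals U + D2·δt, and consequently the patch-dynamics extrapolation U + Δt·(Ū − U)/δt equals U + Δt·D2. -/
/-- For the heat equation, the tooth average of the evolved lifted quadratic at time `δt`
is `U + D2·δt`, so the patch-dynamics extrapolation over a macro step `Δt` gives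
`U + Δt·D2`. -/
theorem patch_dynamics_heat_step
    (U D1 D2 h δt Δt : ℝ) (hh : 0 < h) (hδt : 0 < δt) (hΔt : 0 < Δt)
    (D0 : ℝ) (hD0 : D0 = U - (h ^ 2 / 24) * D2)
    (u : ℝ → ℝ → ℝ) (hu : ∀ t x : ℝ, u t x = D0 + D1 * x + D2 * (x ^ 2 / 2 + t))
    (Ubar : ℝ) (hUbar : Ubar = (1 / h) * ∫ x in (-(h / 2))..(h / 2), u δt x) :
    Ubar = U + D2 * δt ∧ U + Δt * ((Ubar - U) / δt) = U + Δt * D2 := by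
  have h1 : Ubar = U + D2 * δt := by
    have hint : (∫ x in (-(h / 2))..(h / 2), u δt x)
        = (∫ x in (-(h / 2))..(h / 2), (D0 + D1 * x + D2 * (x ^ 2 / 2 + δt))) := by
      apply intervalIntegral.integral_congr
      intro x _
      exact hu δt x
    have i1 : IntervalIntegrable (fun x : ℝ => D0 + D1 * x) MeasureTheory.volume
        (-(h / 2)) (h / 2) := by
      apply Continuous.intervalIntegrable; continuity
    have i2 : IntervalIntegrable (fun x : ℝ => D2 * (x ^ 2 / 2 + δt)) MeasureTheory.volume
        (-(h / 2)) (h / 2) := by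
      apply Continuous.intervalIntegrable; continuity
    have i3 : IntervalIntegrable (fun _ : ℝ => D0) MeasureTheory.volume
        (-(h / 2)) (h / 2) := intervalIntegrable_const
    have i4 : IntervalIntegrable (fun x : ℝ => D1 * x) MeasureTheory.volume
        (-(h / 2)) (h / 2) := by
      apply Continuous.intervalIntegrable; continuity
    have e3 : (∫ _x in (-(h / 2))..(h / 2), D0) = h * D0 := by
      rw [intervalIntegral.integral_const]; simp [mul_comm]
    have e4 : (∫ x in (-(h / 2))..(h / 2), D1 * x) = 0 := by
      rw [intervalIntegral.integral_const_mul, integral_id]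
      ring
    have e2 : (∫ x in (-(h / 2))..(h / 2), D2 * (x ^ 2 / 2 + δt))
        = D2 * (h ^ 3 / 24 + h * δt) := by
      rw [intervalIntegral.integral_const_mul]
      have ia : IntervalIntegrable (fun x : ℝ => x ^ 2 / 2) MeasureTheory.volume
          (-(h / 2)) (h / 2) := by
        apply Continuous.intervalIntegrable; continuity
      have ib : IntervalIntegrable (fun _ : ℝ => δt) MeasureTheory.volume
          (-(h / 2)) (h / 2) := intervalIntegrable_const
      rw [intervalIntegral.integral_add ia ib]
      have exsq : (∫ x in (-(h / 2))..(h / 2), x ^ 2 / 2) = h ^ 3 / 24 := by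
        have : (fun x : ℝ => x ^ 2 / 2) = fun x : ℝ => (1 / 2) * x ^ 2 := by
          funext x; ring
        rw [this, intervalIntegral.integral_const_mul, integral_pow]
        ring
      rw [exsq, intervalIntegral.integral_const]
      simp only [smul_eq_mul]
      ring
    rw [hUbar, hint, intervalIntegral.integral_add i1 i2,
        intervalIntegral.integral_add i3 i4, e3, e4, e2, hD0]
    field_simp
    ring
  refine ⟨h1, ?_⟩
  rw [h1]
  field_simp
  ring
end

section
/- Let U, D1, D2 ∈ ℝ, h > 0, δt > 0, Δt > 0, set D0 = U − (h²/24)·D2, and define ũ_0(x) = D0 + D1·x + (D2/2)·x². Then the tooth average Ū := (1/h) ∫_{−h/2}^{h/2} ũ_0(x − δt) dx equals U − D1·δt + (D2/2)·δt², and consequently the patch-dynamics extrapolation U + Δt·(Ū − U)/δt equals U + Δt·(−D1 + (δt/2)·D2). -/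
/-- For the advection equation, the tooth average of the translated lifted quadratic
`ũ₀(· − δt)` equals `U − D1·δt + (D2/2)·δt²`, so the patch-dynamics extrapolation over a
macro step `Δt` gives `U + Δt·(−D1 + (δt/2)·D2)`. -/
theorem patch_dynamics_advection_step
    (U D1 D2 h δt Δt : ℝ) (hh : 0 < h) (hδt : 0 < δt) (hΔt : 0 < Δt)
    (D0 : ℝ) (hD0 : D0 = U - (h ^ 2 / 24) * D2)
    (u0 : ℝ → ℝ) (hu0 : ∀ x : ℝ, u0 x = D0 + D1 * x + (D2 / 2) * x ^ 2)
    (Ubar : ℝ) (hUbar : Ubar = (1 / h) * ∫ x in (-(h / 2))..(h / 2), u0 (x - δt)) :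
    Ubar = U - D1 * δt + (D2 / 2) * δt ^ 2 ∧
    U + Δt * ((Ubar - U) / δt) = U + Δt * (-D1 + (δt / 2) * D2) := by
  have hkey : Ubar = U - D1 * δt + (D2 / 2) * δt ^ 2 := by
    have hint : (∫ x in (-(h / 2))..(h / 2), u0 (x - δt))
        = ∫ x in (-(h / 2) - δt)..(h / 2 - δt), u0 x := by
      simpa using intervalIntegral.integral_comp_sub_right u0 δt
    have h2 : (∫ x in (-(h / 2) - δt)..(h / 2 - δt), u0 x)
        = ∫ x in (-(h / 2) - δt)..(h / 2 - δt),
            (D0 + D1 * x + (D2 / 2) * x ^ 2) := by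
      refine intervalIntegral.integral_congr fun x _ => hu0 x
    rw [hUbar, hint, h2]
    have h3 : (∫ x in (-(h / 2) - δt)..(h / 2 - δt),
        (D0 + D1 * x + (D2 / 2) * x ^ 2))
        = (∫ x in (-(h / 2) - δt)..(h / 2 - δt), (D0 : ℝ))
          + (∫ x in (-(h / 2) - δt)..(h / 2 - δt), D1 * x)
          + ∫ x in (-(h / 2) - δt)..(h / 2 - δt), (D2 / 2) * x ^ 2 := by
      rw [intervalIntegral.integral_add, intervalIntegral.integral_add]
      · exact intervalIntegrable_const
      · exact (intervalIntegral.intervalIntegrable_id).const_mul D1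
      · exact intervalIntegrable_const.add
          ((intervalIntegral.intervalIntegrable_id).const_mul D1)
      · exact (intervalIntegral.intervalIntegrable_pow 2).const_mul (D2 / 2)
    rw [h3, intervalIntegral.integral_const, intervalIntegral.integral_const_mul,
      intervalIntegral.integral_const_mul, integral_id,
      integral_pow]
    rw [hD0]
    field_simp
    ring
  refine ⟨hkey, ?_⟩
  rw [hkey]
  field_simp
  ring
end

section
/- Let U, D1, D2 ∈ ℝ, h > 0, δt > 0, Δt > 0, set D0 = U − (h²/24)·D2, and define p(x) = D0 + D1·x + (D2/2)·x². Then the fourth derivative of p is identically zero, so u(t, x) := p(x) satisfies ∂_t u = −∂⁴_x u for all (t, x); moreover the tooth average Ū := (1/h) ∫_{−h/2}^{h/2} u(δt, x) dx equals U, and hence the patch-dynamics extrapolation U + Δt·(Ū − U)/δt equals U. -/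
/-- For the fourth-order equation `∂ₜ u = −∂ₓ⁴ u`, the quadratic lifted data
`p(x) = D0 + D1·x + (D2/2)·x²` has vanishing fourth derivative, so `u(t,x) := p(x)`
is an exact solution; its tooth average is `U`, and hence the patch-dynamics
extrapolation leaves `U` unchanged — patch dynamics solves `∂ₜ U = 0`. -/
theorem patch_dynamics_fourth_order_inconsistency
    (U D1 D2 h δt Δt : ℝ) (hh : 0 < h) (hδt : 0 < δt) (hΔt : 0 < Δt)
    (D0 : ℝ) (hD0 : D0 = U - (h ^ 2 / 24) * D2)
    (p : ℝ → ℝ) (hp : ∀ x : ℝ, p x = D0 + D1 * x + (D2 / 2) * x ^ 2)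
    (Ubar : ℝ) (hUbar : Ubar = (1 / h) * ∫ x in (-(h / 2))..(h / 2), p x) :
    (∀ x : ℝ, iteratedDeriv 4 p x = 0) ∧
    (∀ t x : ℝ, deriv (fun _ : ℝ => p x) t = -iteratedDeriv 4 p x) ∧
    Ubar = U ∧
    U + Δt * ((Ubar - U) / δt) = U := by
  have hpe : p = fun x => D0 + D1 * x + (D2 / 2) * x ^ 2 := funext hp
  subst hpe
  have h1 : (deriv fun x => D0 + D1 * x + (D2 / 2) * x ^ 2) = fun x => D1 + D2 * x := by
    funext x
    have : HasDerivAt (fun x => D0 + D1 * x + (D2 / 2) * x ^ 2) (D1 + D2 * x) x := by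
      have := (((hasDerivAt_const x D0).add ((hasDerivAt_id x).const_mul D1)).add
        (((hasDerivAt_pow 2 x)).const_mul (D2 / 2)))
      exact this.congr_deriv (by rw [show (2:ℕ) - 1 = 1 from rfl]; push_cast; ring)
    exact this.deriv
  have h2 : (deriv fun x : ℝ => D1 + D2 * x) = fun _ => D2 := by
    funext x
    have : HasDerivAt (fun x => D1 + D2 * x) D2 x := by
      have := (hasDerivAt_const x D1).add ((hasDerivAt_id x).const_mul D2)
      exact this.congr_deriv (by ring)
    exact this.deriv
  have h4 : ∀ x : ℝ, iteratedDeriv 4 (fun x => D0 + D1 * x + (D2 / 2) * x ^ 2) x = 0 := by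
    intro x
    simp [iteratedDeriv_succ, iteratedDeriv_zero, h1, h2, deriv_const]
  refine ⟨h4, ?_, ?_, ?_⟩
  · intro t x
    simp [h4 x]
  all_goals {
    have hint : (∫ x in (-(h / 2))..(h / 2), (D0 + D1 * x + (D2 / 2) * x ^ 2)) =
        D0 * h + (D2 / 2) * (h ^ 3 / 12) := by
      rw [intervalIntegral.integral_add, intervalIntegral.integral_add,
        intervalIntegral.integral_const, intervalIntegral.integral_const_mul,
        intervalIntegral.integral_const_mul, integral_id, integral_pow]
      · norm_num; ring
      · exact intervalIntegrable_const
      · exact Continuous.intervalIntegrable (by continuity) _ _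
      · exact Continuous.intervalIntegrable (by continuity) _ _
      · exact Continuous.intervalIntegrable (by continuity) _ _
    have hU : Ubar = U := by
      rw [hUbar]
      simp only [hint]
      rw [hD0]
      field_simp
      ring
    simp [hU] }
end
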